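/- Let F : (A, E₁) → (B, E₂) be an exact functor between exact categories, and let E₂' be another exact structure on B. Then E₁' := {(μ, π) ∈ E₁ : (F μ, F π) ∈ E₂'} is an exact structure on A. -/

import Mathlib

open CategoryTheory CategoryTheory.Limits

/-- `(μ, π)` is a kernel-cokernel pair: `μ` is a kernel of `π` and `π` a cokernel of `μ`. -/
def IsKernelCokernelPair {C : Type*} [Category C] [Preadditive C]
    {X Y Z : C} (μ : X ⟶ Y) (π : Y ⟶ Z) : Prop :=
  ∃ w : μ ≫ π = 0,
    Nonempty (IsLimit (KernelFork.ofι μ w)) ∧ Nonempty (IsColimit (CokernelCofork.ofπ π w))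

/-- An exact structure in the sense of Quillen–Bühler: a class of kernel-cokernel pairs,
closed under isomorphisms, satisfying axioms [E0], [E0ᵒᵖ], [E1], [E1ᵒᵖ], [E2], [E2ᵒᵖ]. -/
structure ExactStructure (C : Type*) [Category C] [Preadditive C] where
  /-- the class of kernel-cokernel pairs ("short exact sequences") -/
  E : ∀ ⦃X Y Z : C⦄, (X ⟶ Y) → (Y ⟶ Z) → Prop
  pair : ∀ ⦃X Y Z : C⦄ ⦃μ : X ⟶ Y⦄ ⦃π : Y ⟶ Z⦄, E μ π → IsKernelCokernelPair μ π
  iso_closed : ∀ ⦃X Y Z X' Y' Z' : C⦄ ⦃μ : X ⟶ Y⦄ ⦃π : Y ⟶ Z⦄ ⦃μ' : X' ⟶ Y'⦄ ⦃π' : Y' ⟶ Z'⦄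
      (a : X ≅ X') (b : Y ≅ Y') (c : Z ≅ Z'),
      μ ≫ b.hom = a.hom ≫ μ' → π ≫ c.hom = b.hom ≫ π' → E μ π → E μ' π'
  E0 : ∀ X : C, ∃ (Z : C) (π : X ⟶ Z), E (𝟙 X) π
  E0op : ∀ X : C, ∃ (W : C) (μ : W ⟶ X), E μ (𝟙 X)
  E1 : ∀ ⦃X Y Z : C⦄ ⦃μ : X ⟶ Y⦄ ⦃ν : Y ⟶ Z⦄,
      (∃ (W : C) (π : Y ⟶ W), E μ π) → (∃ (W : C) (π : Z ⟶ W), E ν π) →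
      ∃ (W : C) (π : Z ⟶ W), E (μ ≫ ν) π
  E1op : ∀ ⦃X Y Z : C⦄ ⦃π : X ⟶ Y⦄ ⦃ρ : Y ⟶ Z⦄,
      (∃ (W : C) (μ : W ⟶ X), E μ π) → (∃ (W : C) (μ : W ⟶ Y), E μ ρ) →
      ∃ (W : C) (μ : W ⟶ X), E μ (π ≫ ρ)
  E2 : ∀ ⦃X Y Z : C⦄ ⦃μ : X ⟶ Y⦄ (f : X ⟶ Z), (∃ (W : C) (π : Y ⟶ W), E μ π) →
      ∃ (P : C) (g : Y ⟶ P) (h : Z ⟶ P) (comm : μ ≫ g = f ≫ h),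
        Nonempty (IsColimit (PushoutCocone.mk g h comm)) ∧ ∃ (W : C) (π : P ⟶ W), E h π
  E2op : ∀ ⦃X Y Z : C⦄ ⦃π : Y ⟶ Z⦄ (f : X ⟶ Z), (∃ (W : C) (μ : W ⟶ Y), E μ π) →
      ∃ (P : C) (g : P ⟶ Y) (h : P ⟶ X) (comm : g ≫ π = h ≫ f),
        Nonempty (IsLimit (PullbackCone.mk g h comm)) ∧ ∃ (W : C) (μ : W ⟶ P), E μ h

namespace HellerAux

variable {C : Type*} [Category C] [Preadditive C]

theorem epi_of_cofork {X Y Z : C} {μ : X ⟶ Y} {π : Y ⟶ Z} {w : μ ≫ π = 0}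
    (hc : IsColimit (CokernelCofork.ofπ π w)) : Epi π :=
  ⟨fun u v huv => Cofork.IsColimit.hom_ext hc (by simpa using huv)⟩

theorem mono_of_fork {X Y Z : C} {μ : X ⟶ Y} {π : Y ⟶ Z} {w : μ ≫ π = 0}
    (hl : IsLimit (KernelFork.ofι μ w)) : Mono μ :=
  ⟨fun u v huv => Fork.IsLimit.hom_ext hl (by simpa using huv)⟩

/-- descend a morphism through a cokernel -/
noncomputable def cdesc {X Y Z T : C} {μ : X ⟶ Y} {π : Y ⟶ Z} {w : μ ≫ π = 0}
    (hc : IsColimit (CokernelCofork.ofπ π w)) (k : Y ⟶ T) (hk : μ ≫ k = 0) : Z ⟶ T :=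
  hc.desc (CokernelCofork.ofπ k hk)

@[simp] theorem cdesc_fac {X Y Z T : C} {μ : X ⟶ Y} {π : Y ⟶ Z} {w : μ ≫ π = 0}
    (hc : IsColimit (CokernelCofork.ofπ π w)) (k : Y ⟶ T) (hk : μ ≫ k = 0) :
    π ≫ cdesc hc k hk = k := by
  exact hc.fac (CokernelCofork.ofπ k hk) WalkingParallelPair.one

/-- lift a morphism through a kernel -/
noncomputable def klift {X Y Z T : C} {μ : X ⟶ Y} {π : Y ⟶ Z} {w : μ ≫ π = 0}
    (hl : IsLimit (KernelFork.ofι μ w)) (k : T ⟶ Y) (hk : k ≫ π = 0) : T ⟶ X :=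
  hl.lift (KernelFork.ofι k hk)

@[simp] theorem klift_fac {X Y Z T : C} {μ : X ⟶ Y} {π : Y ⟶ Z} {w : μ ≫ π = 0}
    (hl : IsLimit (KernelFork.ofι μ w)) (k : T ⟶ Y) (hk : k ≫ π = 0) :
    klift hl k hk ≫ μ = k := by
  exact hl.fac (KernelFork.ofι k hk) WalkingParallelPair.zero

theorem coker_unique {X Y Z Z' : C} {μ : X ⟶ Y} {π : Y ⟶ Z} {π' : Y ⟶ Z'}
    {w : μ ≫ π = 0} {w' : μ ≫ π' = 0}
    (hc : IsColimit (CokernelCofork.ofπ π w)) (hc' : IsColimit (CokernelCofork.ofπ π' w')) :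
    ∃ c : Z ≅ Z', π ≫ c.hom = π' := by
  refine ⟨hc.coconePointUniqueUpToIso hc', ?_⟩
  simpa using hc.comp_coconePointUniqueUpToIso_hom hc' WalkingParallelPair.one

theorem ker_unique {X X' Y Z : C} {μ : X ⟶ Y} {μ' : X' ⟶ Y} {π : Y ⟶ Z}
    {w : μ ≫ π = 0} {w' : μ' ≫ π = 0}
    (hl : IsLimit (KernelFork.ofι μ w)) (hl' : IsLimit (KernelFork.ofι μ' w')) :
    ∃ a : X ≅ X', a.hom ≫ μ' = μ := by
  refine ⟨hl.conePointUniqueUpToIso hl', ?_⟩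
  simpa using hl.conePointUniqueUpToIso_hom_comp hl' WalkingParallelPair.zero

noncomputable def isColimit_congr {X Y Z : C} {μ μ' : X ⟶ Y} {π π' : Y ⟶ Z} (e1 : μ = μ') (e2 : π = π')
    {w : μ ≫ π = 0} (hc : IsColimit (CokernelCofork.ofπ π w)) {w' : μ' ≫ π' = 0} :
    IsColimit (CokernelCofork.ofπ π' w') := by subst e1; subst e2; exact hc

noncomputable def isLimit_congr {X Y Z : C} {μ μ' : X ⟶ Y} {π π' : Y ⟶ Z} (e1 : μ = μ') (e2 : π = π')
    {w : μ ≫ π = 0} (hl : IsLimit (KernelFork.ofι μ w)) {w' : μ' ≫ π' = 0} :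
    IsLimit (KernelFork.ofι μ' w') := by subst e1; subst e2; exact hl

end HellerAux

namespace HellerAux

variable {C : Type*} [Category C] [Preadditive C]

/-- replacing the cokernel part of an exact pair by another cokernel -/
theorem coker_replace (S : ExactStructure C) {X Y Z Z' : C} {μ : X ⟶ Y} {π : Y ⟶ Z}
    (hE : S.E μ π) {π' : Y ⟶ Z'} {w' : μ ≫ π' = 0}
    (hc : IsColimit (CokernelCofork.ofπ π' w')) : S.E μ π' := by
  obtain ⟨w, -, ⟨hcπ⟩⟩ := S.pair hE
  obtain ⟨c, hcomm⟩ := coker_unique hcπ hc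
  exact S.iso_closed (Iso.refl X) (Iso.refl Y) c (by simp) (by simpa using hcomm) hE

/-- replacing the kernel part of an exact pair by another kernel -/
theorem ker_replace (S : ExactStructure C) {X X' Y Z : C} {μ : X ⟶ Y} {π : Y ⟶ Z}
    (hE : S.E μ π) {μ' : X' ⟶ Y} {w' : μ' ≫ π = 0}
    (hl : IsLimit (KernelFork.ofι μ' w')) : S.E μ' π := by
  obtain ⟨w, ⟨hkμ⟩, -⟩ := S.pair hE
  obtain ⟨a, hcomm⟩ := ker_unique hkμ hl
  exact S.iso_closed a (Iso.refl Y) (Iso.refl Z) (by simpa using hcomm.symm) (by simp) hE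

/-- In a pushout square along `μ`, a cokernel of `h` gives a cokernel of `μ`. -/
noncomputable def pushout_coker {X Y Z P W : C} {μ : X ⟶ Y} {f : X ⟶ Z} {g : Y ⟶ P} {h : Z ⟶ P}
    {comm : μ ≫ g = f ≫ h} (hpo : IsColimit (PushoutCocone.mk g h comm))
    {π : P ⟶ W} {w : h ≫ π = 0} (hπ : IsColimit (CokernelCofork.ofπ π w))
    (w0 : μ ≫ (g ≫ π) = 0) : IsColimit (CokernelCofork.ofπ (g ≫ π) w0) := by
  have hepi : Epi π := epi_of_cofork hπ
  refine CokernelCofork.IsColimit.ofπ _ _ (fun {T} k hk => ?_) (fun {T} k hk => ?_)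
    (fun {T} k hk m hm => ?_)
  · exact cdesc hπ (PushoutCocone.IsColimit.desc hpo k 0 (by rw [hk, comp_zero]))
      (by exact PushoutCocone.IsColimit.inr_desc hpo k 0 (by rw [hk, comp_zero]))
  · erw [Category.assoc, cdesc_fac]
    exact PushoutCocone.IsColimit.inl_desc hpo k 0 (by rw [hk, comp_zero])
  · erw [← cancel_epi π, cdesc_fac]
    refine PushoutCocone.IsColimit.hom_ext hpo ?_ ?_
    · rw [PushoutCocone.IsColimit.inl_desc]
      exact (Category.assoc _ _ _).symm.trans hm
    · rw [PushoutCocone.IsColimit.inr_desc]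
      simp only [PushoutCocone.mk_inr]
      change h ≫ π ≫ m = 0
      rw [← Category.assoc, w, zero_comp]

/-- In a pullback square along `π`, a kernel of `h` gives a kernel of `π`. -/
noncomputable def pullback_ker {X Y Z P K : C} {π : Y ⟶ Z} {f : X ⟶ Z} {g : P ⟶ Y} {h : P ⟶ X}
    {comm : g ≫ π = h ≫ f} (hpb : IsLimit (PullbackCone.mk g h comm))
    {μ : K ⟶ P} {w : μ ≫ h = 0} (hμ : IsLimit (KernelFork.ofι μ w))
    (w0 : (μ ≫ g) ≫ π = 0) : IsLimit (KernelFork.ofι (μ ≫ g) w0) := by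
  have hmono : Mono μ := mono_of_fork hμ
  refine KernelFork.IsLimit.ofι _ _ (fun {T} k hk => ?_) (fun {T} k hk => ?_)
    (fun {T} k hk m hm => ?_)
  · exact klift hμ (PullbackCone.IsLimit.lift hpb k 0 (by rw [hk, zero_comp]))
      (by exact PullbackCone.IsLimit.lift_snd hpb k 0 (by rw [hk, zero_comp]))
  · erw [← Category.assoc, klift_fac]
    exact PullbackCone.IsLimit.lift_fst hpb k 0 (by rw [hk, zero_comp])
  · erw [← cancel_mono μ, klift_fac]
    refine PullbackCone.IsLimit.hom_ext hpb ?_ ?_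
    · rw [PullbackCone.IsLimit.lift_fst]
      exact (Category.assoc _ _ _).trans hm
    · rw [PullbackCone.IsLimit.lift_snd]
      simp only [PullbackCone.mk_snd]
      change (m ≫ μ) ≫ h = 0
      rw [Category.assoc, w, comp_zero]


/-- Short five lemma (mono version): given a morphism of kernel–cokernel pairs which is
the identity on the left and an isomorphism on the right, where the first row belongs to
an exact structure, the middle map is an isomorphism. -/
theorem five (S : ExactStructure C) {X Y Z Y' Z' : C}
    {a : X ⟶ Y} {b : Y ⟶ Z} (hab : S.E a b)
    {a' : X ⟶ Y'} {b' : Y' ⟶ Z'} (hab' : IsKernelCokernelPair a' b')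
    (v : Y ⟶ Y') (t : Z ≅ Z') (hav : a ≫ v = a') (hbv : v ≫ b' = b ≫ t.hom) :
    IsIso v := by
  obtain ⟨wab, ⟨hka⟩, ⟨hcb⟩⟩ := S.pair hab
  obtain ⟨wab', ⟨hka'⟩, ⟨hcb'⟩⟩ := hab'
  have hmono_a' : Mono a' := mono_of_fork hka'
  have hepi_b : Epi b := epi_of_cofork hcb
  -- pull back `b` along `b' ≫ t.inv`
  obtain ⟨Q, p, q, comm, ⟨hpb⟩, ⟨K, μQ, hμq⟩⟩ := S.E2op (b' ≫ t.inv) ⟨X, a, hab⟩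
  obtain ⟨wq, ⟨hkq⟩, ⟨hcq⟩⟩ := S.pair hμq
  -- a section `m` of `p`
  have hvb : 𝟙 Y ≫ b = v ≫ b' ≫ t.inv := by
    rw [Category.id_comp, ← Category.assoc, hbv, Category.assoc, Iso.hom_inv_id,
      Category.comp_id]
  obtain ⟨m, hmp, hmq⟩ :
      ∃ m : Y ⟶ Q, m ≫ p = 𝟙 Y ∧ m ≫ q = v :=
    ⟨PullbackCone.IsLimit.lift hpb (𝟙 Y) v hvb,
      by exact PullbackCone.IsLimit.lift_fst hpb (𝟙 Y) v hvb,
      by exact PullbackCone.IsLimit.lift_snd hpb (𝟙 Y) v hvb⟩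
  -- the map `lam : X ⟶ Q`
  have hlam0 : (0 : X ⟶ Y) ≫ b = a' ≫ b' ≫ t.inv := by
    rw [zero_comp, ← Category.assoc, wab', zero_comp]
  obtain ⟨lam, hlamp, hlamq⟩ :
      ∃ lam : X ⟶ Q, lam ≫ p = 0 ∧ lam ≫ q = a' :=
    ⟨PullbackCone.IsLimit.lift hpb 0 a' hlam0,
      by exact PullbackCone.IsLimit.lift_fst hpb 0 a' hlam0,
      by exact PullbackCone.IsLimit.lift_snd hpb 0 a' hlam0⟩
  have hmono_lam : Mono lam := by
    have : Mono (lam ≫ q) := by rw [hlamq]; exact hmono_a'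
    exact mono_of_mono lam q
  -- factor `(𝟙 - p ≫ m) ≫ q` through `a'`
  have h1 : (𝟙 Q - p ≫ m) ≫ p = 0 := by
    rw [Preadditive.sub_comp, Category.id_comp, Category.assoc, hmp, Category.comp_id,
      sub_self]
  have hu : ((𝟙 Q - p ≫ m) ≫ q) ≫ b' = 0 := by
    have h2 : (((𝟙 Q - p ≫ m) ≫ q) ≫ b') ≫ t.inv = 0 ≫ t.inv := by
      rw [zero_comp, Category.assoc, Category.assoc, ← comm, ← Category.assoc, h1, zero_comp]
    exact (cancel_mono t.inv).mp h2
  obtain ⟨n, hnq⟩ : ∃ n : Q ⟶ X, n ≫ a' = (𝟙 Q - p ≫ m) ≫ q :=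
    ⟨klift hka' _ hu, klift_fac hka' _ hu⟩
  have hnlam : n ≫ lam = 𝟙 Q - p ≫ m := by
    refine PullbackCone.IsLimit.hom_ext hpb ?_ ?_
    · simp only [PullbackCone.mk_fst]
      change (n ≫ lam) ≫ p = (𝟙 Q - p ≫ m) ≫ p
      rw [Category.assoc, hlamp, comp_zero, h1]
    · simp only [PullbackCone.mk_snd]
      change (n ≫ lam) ≫ q = (𝟙 Q - p ≫ m) ≫ q
      rw [Category.assoc, hlamq, hnq]
  -- comparison of kernels of `b`
  have wμp : (μQ ≫ p) ≫ b = 0 := by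
    rw [Category.assoc, comm, ← Category.assoc, wq, zero_comp]
  obtain ⟨i, hi⟩ := ker_unique (pullback_ker hpb hkq wμp) hka
  -- compute `μQ ≫ n = -i.hom`
  have hμn : μQ ≫ n = -i.hom := by
    have e1 : (μQ ≫ n) ≫ a' = (-i.hom) ≫ a' := by
      calc (μQ ≫ n) ≫ a' = μQ ≫ (𝟙 Q - p ≫ m) ≫ q := by rw [Category.assoc, hnq]
        _ = μQ ≫ q - ((μQ ≫ p) ≫ m) ≫ q := by
              rw [Preadditive.sub_comp, Category.id_comp, Preadditive.comp_sub]
              simp only [Category.assoc]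
        _ = (-i.hom) ≫ a' := by
              rw [wq, zero_sub, ← hi, Preadditive.neg_comp]
              simp only [Category.assoc, hmq, hav]
    exact (cancel_mono a').mp e1
  have hμr : μQ ≫ (-(n ≫ i.inv)) = 𝟙 K := by
    rw [Preadditive.comp_neg, ← Category.assoc, hμn, Preadditive.neg_comp, neg_neg,
      Iso.hom_inv_id]
  -- construct the retraction `s`
  have hc0 : μQ ≫ (p - (-(n ≫ i.inv)) ≫ (i.hom ≫ a)) = 0 := by
    rw [Preadditive.comp_sub, ← Category.assoc μQ, hμr, Category.id_comp, hi, sub_self]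
  obtain ⟨s, hqs⟩ :
      ∃ s : Y' ⟶ Y, q ≫ s = p - (-(n ≫ i.inv)) ≫ (i.hom ≫ a) :=
    ⟨cdesc hcq _ hc0, cdesc_fac hcq _ hc0⟩
  have hmn : m ≫ n = 0 := by
    have h3 : (m ≫ n) ≫ lam = 0 ≫ lam := by
      rw [zero_comp, Category.assoc, hnlam, Preadditive.comp_sub, Category.comp_id,
        ← Category.assoc, hmp, Category.id_comp, sub_self]
    exact (cancel_mono lam).mp h3
  have hmr : m ≫ (-(n ≫ i.inv)) = 0 := by
    rw [Preadditive.comp_neg, ← Category.assoc, hmn, zero_comp, neg_zero]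
  have hvs : v ≫ s = 𝟙 Y := by
    rw [← hmq, Category.assoc, hqs, Preadditive.comp_sub, hmp, ← Category.assoc, hmr,
      zero_comp, sub_zero]
  -- `v` is an epimorphism
  have hepi_v : Epi v := by
    refine Preadditive.epi_of_cancel_zero _ (fun {R} x hx => ?_)
    have hax : a' ≫ x = 0 := by rw [← hav, Category.assoc, hx, comp_zero]
    obtain ⟨y, hxy⟩ : ∃ y, b' ≫ y = x := ⟨cdesc hcb' x hax, cdesc_fac hcb' x hax⟩
    have h4 : b ≫ t.hom ≫ y = b ≫ 0 := by
      rw [comp_zero, ← Category.assoc, ← hbv, Category.assoc, hxy, hx]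
    have h5 : t.hom ≫ y = 0 := (cancel_epi b).mp h4
    have hy : y = 0 := by
      have := congrArg (fun z => t.inv ≫ z) h5
      simpa using this
    rw [← hxy, hy, comp_zero]
  have hsv : s ≫ v = 𝟙 Y' := by
    rw [← cancel_epi v, ← Category.assoc, hvs, Category.id_comp, Category.comp_id]
  exact ⟨s, hvs, hsv⟩

/-- Short five lemma (epi version): dual statement. -/
theorem fiveop (S : ExactStructure C) {X X' Y Y' Z : C}
    {a : X ⟶ Y} {b : Y ⟶ Z} (hab : IsKernelCokernelPair a b)
    {a' : X' ⟶ Y'} {b' : Y' ⟶ Z} (hab' : S.E a' b')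
    (v : Y ⟶ Y') (w : X ≅ X') (hav : a ≫ v = w.hom ≫ a') (hbv : v ≫ b' = b) :
    IsIso v := by
  obtain ⟨wab, ⟨hka⟩, ⟨hcb⟩⟩ := hab
  obtain ⟨wab', ⟨hka'⟩, ⟨hcb'⟩⟩ := S.pair hab'
  have hmono_a' : Mono a' := mono_of_fork hka'
  have hepi_b : Epi b := epi_of_cofork hcb
  -- push out `a'` along `w.inv ≫ a`
  obtain ⟨Q, g, h, comm, ⟨hpo⟩, ⟨WQ, πQ, hπQ⟩⟩ := S.E2 (w.inv ≫ a) ⟨Z, b', hab'⟩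
  obtain ⟨wπ, ⟨hkh⟩, ⟨hcπ⟩⟩ := S.pair hπQ
  -- a retraction `m` of `g`
  have hva : a' ≫ 𝟙 Y' = (w.inv ≫ a) ≫ v := by
    rw [Category.comp_id, Category.assoc, hav, ← Category.assoc, Iso.inv_hom_id,
      Category.id_comp]
  obtain ⟨m, hgm, hhm⟩ :
      ∃ m : Q ⟶ Y', g ≫ m = 𝟙 Y' ∧ h ≫ m = v :=
    ⟨PushoutCocone.IsColimit.desc hpo (𝟙 Y') v hva,
      by exact PushoutCocone.IsColimit.inl_desc hpo (𝟙 Y') v hva,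
      by exact PushoutCocone.IsColimit.inr_desc hpo (𝟙 Y') v hva⟩
  -- the map `lam : Q ⟶ Z`
  have hlam0 : a' ≫ (0 : Y' ⟶ Z) = (w.inv ≫ a) ≫ b := by
    rw [comp_zero, Category.assoc, wab, comp_zero]
  obtain ⟨lam, hglam, hhlam⟩ :
      ∃ lam : Q ⟶ Z, g ≫ lam = 0 ∧ h ≫ lam = b :=
    ⟨PushoutCocone.IsColimit.desc hpo 0 b hlam0,
      by exact PushoutCocone.IsColimit.inl_desc hpo 0 b hlam0,
      by exact PushoutCocone.IsColimit.inr_desc hpo 0 b hlam0⟩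
  have hepi_lam : Epi lam := by
    have : Epi (h ≫ lam) := by rw [hhlam]; exact hepi_b
    exact epi_of_epi h lam
  -- factor `h ≫ (𝟙 - m ≫ g)` through `b`
  have h1 : g ≫ (𝟙 Q - m ≫ g) = 0 := by
    rw [Preadditive.comp_sub, Category.comp_id, ← Category.assoc, hgm, Category.id_comp,
      sub_self]
  have hah : a ≫ h = w.hom ≫ a' ≫ g := by
    rw [comm, ← Category.assoc, ← Category.assoc, Iso.hom_inv_id, Category.id_comp]
  have hu : a ≫ h ≫ (𝟙 Q - m ≫ g) = 0 := by
    calc a ≫ h ≫ (𝟙 Q - m ≫ g) = w.hom ≫ a' ≫ g ≫ (𝟙 Q - m ≫ g) := by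
          rw [← Category.assoc, hah]; simp only [Category.assoc]
      _ = 0 := by rw [h1, comp_zero, comp_zero]
  obtain ⟨n, hbn⟩ : ∃ n : Z ⟶ Q, b ≫ n = h ≫ (𝟙 Q - m ≫ g) :=
    ⟨cdesc hcb _ hu, cdesc_fac hcb _ hu⟩
  have hlamn : lam ≫ n = 𝟙 Q - m ≫ g := by
    refine PushoutCocone.IsColimit.hom_ext hpo ?_ ?_
    · simp only [PushoutCocone.mk_inl]
      change g ≫ lam ≫ n = g ≫ (𝟙 Q - m ≫ g)
      rw [← Category.assoc, hglam, zero_comp, h1]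
    · simp only [PushoutCocone.mk_inr]
      change h ≫ lam ≫ n = h ≫ (𝟙 Q - m ≫ g)
      rw [← Category.assoc, hhlam, hbn]
  -- comparison of cokernels of `a'`
  have wgπ : a' ≫ g ≫ πQ = 0 := by
    rw [← Category.assoc, comm, Category.assoc, wπ, comp_zero]
  obtain ⟨i, hi⟩ := coker_unique (pushout_coker hpo hcπ wgπ) hcb'
  have hgb : g ≫ πQ = b' ≫ i.inv := by
    rw [← hi, Category.assoc, Iso.hom_inv_id, Category.comp_id]
  -- compute `n ≫ πQ = -i.inv`
  have hnπ : n ≫ πQ = -i.inv := by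
    have e1 : b ≫ n ≫ πQ = b ≫ (-i.inv) := by
      calc b ≫ n ≫ πQ = (h ≫ (𝟙 Q - m ≫ g)) ≫ πQ := by rw [← Category.assoc, hbn]
        _ = h ≫ πQ - ((h ≫ m) ≫ g) ≫ πQ := by
              rw [Preadditive.comp_sub, Category.comp_id, Preadditive.sub_comp]
              simp only [Category.assoc]
        _ = -(v ≫ b' ≫ i.inv) := by
              rw [wπ, zero_sub, hhm, Category.assoc, hgb]
        _ = b ≫ (-i.inv) := by
              rw [Preadditive.comp_neg, ← hbv]
              simp only [Category.assoc]
    exact (cancel_epi b).mp e1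
  have hrπ : (-(i.hom ≫ n)) ≫ πQ = 𝟙 WQ := by
    rw [Preadditive.neg_comp, Category.assoc, hnπ, Preadditive.comp_neg, neg_neg,
      Iso.hom_inv_id]
  -- the candidate inverse `s`
  have hc0 : (g - b' ≫ i.inv ≫ (-(i.hom ≫ n))) ≫ πQ = 0 := by
    rw [Preadditive.sub_comp, Category.assoc, Category.assoc, hrπ, Category.comp_id, hgb,
      sub_self]
  obtain ⟨s, hsh⟩ : ∃ s : Y' ⟶ Y, s ≫ h = g - b' ≫ i.inv ≫ (-(i.hom ≫ n)) :=
    ⟨klift hkh _ hc0, klift_fac hkh _ hc0⟩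
  have hnm : n ≫ m = 0 := by
    have h3 : lam ≫ n ≫ m = lam ≫ 0 := by
      rw [comp_zero, ← Category.assoc, hlamn, Preadditive.sub_comp, Category.id_comp,
        Category.assoc, hgm, Category.comp_id, sub_self]
    exact (cancel_epi lam).mp h3
  have hrm : (-(i.hom ≫ n)) ≫ m = 0 := by
    rw [Preadditive.neg_comp, Category.assoc, hnm, comp_zero, neg_zero]
  have hsv : s ≫ v = 𝟙 Y' := by
    rw [← hhm, ← Category.assoc, hsh, Preadditive.sub_comp, hgm, Category.assoc,
      Category.assoc, hrm, comp_zero, comp_zero, sub_zero]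
  -- `v` is a monomorphism
  have hmono_v : Mono v := by
    refine Preadditive.mono_of_cancel_zero _ (fun {R} x hx => ?_)
    have hxb : x ≫ b = 0 := by rw [← hbv, ← Category.assoc, hx, zero_comp]
    obtain ⟨y, hxy⟩ : ∃ y, y ≫ a = x := ⟨klift hka x hxb, klift_fac hka x hxb⟩
    have h4 : (y ≫ w.hom) ≫ a' = 0 ≫ a' := by
      rw [zero_comp, Category.assoc, ← hav, ← Category.assoc, hxy, hx]
    have h5 : y ≫ w.hom = 0 := (cancel_mono a').mp h4
    have hy : y = 0 := by
      have := congrArg (fun z => z ≫ w.inv) h5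
      simpa using this
    rw [← hxy, hy, zero_comp]
  have hvs : v ≫ s = 𝟙 Y := by
    rw [← cancel_mono v, Category.assoc, hsv, Category.comp_id, Category.id_comp]
  exact ⟨s, hvs, hsv⟩


end HellerAux

open HellerAux in
/-- Heller's theorem: for an exact functor `F : (A, E₁) ⟶ (B, E₂)` and another exact
structure `E₂'` on `B`, the class `{(μ, π) ∈ E₁ : (F μ, F π) ∈ E₂'}` is an exact
structure on `A`. -/
theorem stmt8 {A B : Type*} [Category A] [Preadditive A] [Category B] [Preadditive B]
    (F : A ⥤ B) [F.Additive] (S₁ : ExactStructure A) (S₂ S₂' : ExactStructure B)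
    (hexact : ∀ {X Y Z : A} (μ : X ⟶ Y) (π : Y ⟶ Z),
      S₁.E μ π → S₂.E (F.map μ) (F.map π)) :
    ∃ S₁' : ExactStructure A, ∀ {X Y Z : A} (μ : X ⟶ Y) (π : Y ⟶ Z),
      S₁'.E μ π ↔ (S₁.E μ π ∧ S₂'.E (F.map μ) (F.map π)) := by
  refine ⟨{
    E := fun X Y Z μ π => S₁.E μ π ∧ S₂'.E (F.map μ) (F.map π)
    pair := fun X Y Z μ π h => S₁.pair h.1
    iso_closed := fun X Y Z X' Y' Z' μ π μ' π' a b c h1 h2 h => by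
      refine ⟨S₁.iso_closed a b c h1 h2 h.1, ?_⟩
      refine S₂'.iso_closed (F.mapIso a) (F.mapIso b) (F.mapIso c) ?_ ?_ h.2
      · simp only [Functor.mapIso_hom, ← F.map_comp, h1]
      · simp only [Functor.mapIso_hom, ← F.map_comp, h2]
    E0 := fun X => by
      obtain ⟨Z, π, h⟩ := S₁.E0 X
      obtain ⟨w2, -, ⟨hc2⟩⟩ := S₂.pair (hexact _ _ h)
      obtain ⟨Z', π', h'⟩ := S₂'.E0 (F.obj X)
      rw [← F.map_id] at h'
      exact ⟨Z, π, h, coker_replace S₂' h' hc2⟩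
    E0op := fun X => by
      obtain ⟨W, μ, h⟩ := S₁.E0op X
      obtain ⟨w2, ⟨hk2⟩, -⟩ := S₂.pair (hexact _ _ h)
      obtain ⟨W', μ', h'⟩ := S₂'.E0op (F.obj X)
      rw [← F.map_id] at h'
      exact ⟨W, μ, h, ker_replace S₂' h' hk2⟩
    E1 := fun X Y Z μ ν hμ hν => by
      obtain ⟨W1, π1, h1, h1'⟩ := hμ
      obtain ⟨W2, π2, h2, h2'⟩ := hν
      obtain ⟨W, π, h⟩ := S₁.E1 ⟨W1, π1, h1⟩ ⟨W2, π2, h2⟩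
      obtain ⟨w3, -, ⟨hc3⟩⟩ := S₂.pair (hexact _ _ h)
      obtain ⟨W'', π'', h''⟩ := S₂'.E1 ⟨_, F.map π1, h1'⟩ ⟨_, F.map π2, h2'⟩
      rw [← F.map_comp] at h''
      exact ⟨W, π, h, coker_replace S₂' h'' hc3⟩
    E1op := fun X Y Z π ρ hπ hρ => by
      obtain ⟨W1, μ1, h1, h1'⟩ := hπ
      obtain ⟨W2, μ2, h2, h2'⟩ := hρ
      obtain ⟨W, μ, h⟩ := S₁.E1op ⟨W1, μ1, h1⟩ ⟨W2, μ2, h2⟩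
      obtain ⟨w3, ⟨hk3⟩, -⟩ := S₂.pair (hexact _ _ h)
      obtain ⟨W'', μ'', h''⟩ := S₂'.E1op ⟨_, F.map μ1, h1'⟩ ⟨_, F.map μ2, h2'⟩
      rw [← F.map_comp] at h''
      exact ⟨W, μ, h, ker_replace S₂' h'' hk3⟩
    E2 := fun X Y Z μ f hμ => by
      obtain ⟨W0, π₀, h₀, h₀'⟩ := hμ
      obtain ⟨P, g, h, comm, ⟨hpo⟩, ⟨W, π, hhπ⟩⟩ := S₁.E2 f ⟨W0, π₀, h₀⟩
      obtain ⟨wπ, ⟨hkh⟩, ⟨hcπ⟩⟩ := S₁.pair hhπ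
      -- `g ≫ π` is a cokernel of `μ`, hence `(μ, g ≫ π) ∈ E₁`
      have w0 : μ ≫ g ≫ π = 0 := by rw [← Category.assoc, comm, Category.assoc, wπ, comp_zero]
      have hμgπ : S₁.E μ (g ≫ π) := coker_replace S₁ h₀ (pushout_coker hpo hcπ w0)
      -- images in `B`
      obtain ⟨wB1, ⟨hkB1⟩, ⟨hcB1⟩⟩ := S₂.pair (hexact _ _ hhπ)
      obtain ⟨wB2, -, ⟨hcB2⟩⟩ := S₂.pair (hexact _ _ hμgπ)
      have hcB2' : IsColimit (CokernelCofork.ofπ (F.map g ≫ F.map π)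
          (show F.map μ ≫ F.map g ≫ F.map π = 0 by
            rw [← F.map_comp, ← F.map_comp, w0, F.map_zero])) :=
        isColimit_congr rfl (F.map_comp g π) hcB2
      -- the pushout in `B` for the structure `S₂'`
      obtain ⟨P'', g'', h'', comm'', ⟨hpo''⟩, ⟨W'', π'', h2''⟩⟩ :=
        S₂'.E2 (F.map f) ⟨_, F.map π₀, h₀'⟩
      obtain ⟨wπ'', -, ⟨hcπ''⟩⟩ := S₂'.pair h2''
      -- comparison morphism
      have hFcomm : F.map μ ≫ F.map g = F.map f ≫ F.map h := by
        rw [← F.map_comp, ← F.map_comp, comm]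
      obtain ⟨k, hgk, hhk⟩ :
          ∃ k : P'' ⟶ F.obj P, g'' ≫ k = F.map g ∧ h'' ≫ k = F.map h :=
        ⟨PushoutCocone.IsColimit.desc hpo'' (F.map g) (F.map h) hFcomm,
          by exact PushoutCocone.IsColimit.inl_desc hpo'' (F.map g) (F.map h) hFcomm,
          by exact PushoutCocone.IsColimit.inr_desc hpo'' (F.map g) (F.map h) hFcomm⟩
      -- comparison of cokernels of `F.map μ`
      have w0'' : F.map μ ≫ g'' ≫ π'' = 0 := by
        rw [← Category.assoc, comm'', Category.assoc, wπ'', comp_zero]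
      obtain ⟨t, ht⟩ := coker_unique (pushout_coker hpo'' hcπ'' w0'') hcB2'
      -- the comparison `k` is compatible with the cokernels
      have hkt : k ≫ F.map π = π'' ≫ t.hom := by
        refine PushoutCocone.IsColimit.hom_ext hpo'' ?_ ?_
        · simp only [PushoutCocone.mk_inl]
          change g'' ≫ k ≫ F.map π = g'' ≫ π'' ≫ t.hom
          rw [← Category.assoc, hgk, ← Category.assoc, ← ht, Category.assoc]
        · simp only [PushoutCocone.mk_inr]
          change h'' ≫ k ≫ F.map π = h'' ≫ π'' ≫ t.hom
          rw [← Category.assoc, hhk, ← F.map_comp, wπ, F.map_zero, ← Category.assoc, wπ'',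
            zero_comp]
      -- `k` is an isomorphism by the short five lemma
      have : IsIso k := five S₂' h2'' ⟨wB1, ⟨hkB1⟩, ⟨hcB1⟩⟩ k t hhk hkt
      refine ⟨P, g, h, comm, ⟨hpo⟩, W, π, hhπ, ?_⟩
      exact S₂'.iso_closed (Iso.refl _) (asIso k) t (by simpa using hhk)
        (by simpa using hkt.symm) h2''
    E2op := fun X Y Z π f hπ => by
      obtain ⟨W0, μ₀, h₀, h₀'⟩ := hπ
      obtain ⟨P, g, h, comm, ⟨hpb⟩, ⟨W, μP, hμh⟩⟩ := S₁.E2op f ⟨W0, μ₀, h₀⟩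
      obtain ⟨wμ, ⟨hkμ⟩, ⟨hcμ⟩⟩ := S₁.pair hμh
      have w0 : (μP ≫ g) ≫ π = 0 := by
        rw [Category.assoc, comm, ← Category.assoc, wμ, zero_comp]
      have hμgπ : S₁.E (μP ≫ g) π := ker_replace S₁ h₀ (pullback_ker hpb hkμ w0)
      obtain ⟨wB1, ⟨hkB1⟩, ⟨hcB1⟩⟩ := S₂.pair (hexact _ _ hμh)
      obtain ⟨wB2, ⟨hkB2⟩, -⟩ := S₂.pair (hexact _ _ hμgπ)
      have hkB2' : IsLimit (KernelFork.ofι (F.map μP ≫ F.map g)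
          (show (F.map μP ≫ F.map g) ≫ F.map π = 0 by
            rw [← F.map_comp, ← F.map_comp, w0, F.map_zero])) :=
        isLimit_congr (F.map_comp μP g) rfl hkB2
      obtain ⟨Q', g', h', comm', ⟨hpb'⟩, ⟨W', μ', h2'⟩⟩ :=
        S₂'.E2op (F.map f) ⟨_, F.map μ₀, h₀'⟩
      obtain ⟨wμ', ⟨hkμ'⟩, -⟩ := S₂'.pair h2'
      have hFcomm : F.map g ≫ F.map π = F.map h ≫ F.map f := by
        rw [← F.map_comp, ← F.map_comp, comm]
      obtain ⟨k, hkg, hkh⟩ :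
          ∃ k : F.obj P ⟶ Q', k ≫ g' = F.map g ∧ k ≫ h' = F.map h :=
        ⟨PullbackCone.IsLimit.lift hpb' (F.map g) (F.map h) hFcomm,
          by exact PullbackCone.IsLimit.lift_fst hpb' (F.map g) (F.map h) hFcomm,
          by exact PullbackCone.IsLimit.lift_snd hpb' (F.map g) (F.map h) hFcomm⟩
      have w0' : (μ' ≫ g') ≫ F.map π = 0 := by
        rw [Category.assoc, comm', ← Category.assoc, wμ', zero_comp]
      obtain ⟨t, ht⟩ := ker_unique hkB2' (pullback_ker hpb' hkμ' w0')
      -- `t : F.obj W ≅ W'` with `t.hom ≫ (μ' ≫ g') = F.map μP ≫ F.map g`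
      have hkt : F.map μP ≫ k = t.hom ≫ μ' := by
        refine PullbackCone.IsLimit.hom_ext hpb' ?_ ?_
        · simp only [PullbackCone.mk_fst]
          change (F.map μP ≫ k) ≫ g' = (t.hom ≫ μ') ≫ g'
          rw [Category.assoc, hkg, Category.assoc, ht]
        · simp only [PullbackCone.mk_snd]
          change (F.map μP ≫ k) ≫ h' = (t.hom ≫ μ') ≫ h'
          rw [Category.assoc, hkh, ← F.map_comp, wμ, F.map_zero, Category.assoc, wμ',
            comp_zero]
      have : IsIso k := fiveop S₂' ⟨wB1, ⟨hkB1⟩, ⟨hcB1⟩⟩ h2' k t hkt hkh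
      refine ⟨P, g, h, comm, ⟨hpb⟩, W, μP, hμh, ?_⟩
      exact S₂'.iso_closed t.symm (asIso k).symm (Iso.refl _)
        (by rw [Iso.symm_hom, asIso_inv, Iso.symm_hom, ← cancel_mono k]
            simp only [Category.assoc, IsIso.inv_hom_id, Category.comp_id, hkt,
              Iso.inv_hom_id_assoc])
        (by simp only [Iso.refl_hom, Category.comp_id, Iso.symm_hom, asIso_inv]
            rw [← hkh, IsIso.inv_hom_id_assoc]) h2'
  }, fun μ π => Iff.rfl⟩
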